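/- arXiv:2003.13872 — 4 statements merged into one kernel-verified Lean document; each statement's English description precedes it below -/
import Mathlib

section
/- Let λ be a real number and x a nonzero real number. For every integer k ≥ 1, the k-th power of the 2×2 matrix product [[1, 0], [λ/x, 1]] · [[0, x], [−1/x, 0]] equals the matrix [[−U_{k−2}(λ), U_{k−1}(λ)·x], [−U_{k−1}(λ)/x, U_k(λ)]]. -/
/-- Auxiliary: normalized Chebyshev polynomials of the second kind,
shifted so that index `0` corresponds to `U_{-1}`. -/
noncomputable def chebUAux (x : ℝ) : ℕ → ℝ
  | 0 => 0
  | 1 => 1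
  | (n + 2) => x * chebUAux x (n + 1) - chebUAux x n

/-- `chebU k x = U_k(x)` for integers `k ≥ -1` (and `0` for `k < -1`):
`U_{-1}(x) = 0`, `U_0(x) = 1`, `U_k(x) = x·U_{k-1}(x) - U_{k-2}(x)` for `k ≥ 1`. -/
noncomputable def chebU (k : ℤ) (x : ℝ) : ℝ := chebUAux x (k + 1).toNat

lemma chebU_aux_pow (lam x : ℝ) (hx : x ≠ 0) (m : ℕ) :
    (!![(1 : ℝ), 0; lam / x, 1] * !![(0 : ℝ), x; -1 / x, 0]) ^ (m + 1) =
      !![-chebUAux lam m, chebUAux lam (m + 1) * x;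
         -chebUAux lam (m + 1) / x, chebUAux lam (m + 2)] := by
  induction m with
  | zero =>
      ext i j
      fin_cases i <;> fin_cases j <;>
        · simp [Matrix.mul_apply, Fin.sum_univ_two, chebUAux]
          try field_simp
  | succ n ih =>
      rw [pow_succ, ih]
      ext i j
      fin_cases i <;> fin_cases j <;>
        · simp [Matrix.mul_apply, Fin.sum_univ_two, chebUAux]
          try field_simp
          try ring

/-- For `λ ∈ ℝ`, `x ≠ 0` and `k ≥ 1`,
`([[1,0],[λ/x,1]]·[[0,x],[-1/x,0]])^k
  = [[-U_{k-2}(λ), U_{k-1}(λ)·x],[-U_{k-1}(λ)/x, U_k(λ)]]`. -/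
theorem chebyshev_matrix_power (lam x : ℝ) (hx : x ≠ 0) (k : ℕ) (hk : 1 ≤ k) :
    (!![(1 : ℝ), 0; lam / x, 1] * !![(0 : ℝ), x; -1 / x, 0]) ^ k =
      !![-chebU ((k : ℤ) - 2) lam, chebU ((k : ℤ) - 1) lam * x;
         -chebU ((k : ℤ) - 1) lam / x, chebU (k : ℤ) lam] := by
  obtain ⟨m, rfl⟩ := Nat.exists_eq_add_of_le hk
  have h1 : ((1 + m : ℕ) : ℤ) - 2 + 1 = (m : ℤ) := by push_cast; ring
  have h2 : ((1 + m : ℕ) : ℤ) - 1 + 1 = ((m + 1 : ℕ) : ℤ) := by push_cast; ring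
  have h3 : ((1 + m : ℕ) : ℤ) + 1 = ((m + 2 : ℕ) : ℤ) := by push_cast; ring
  rw [show 1 + m = m + 1 from Nat.add_comm 1 m] at *
  simp only [chebU, h1, h2, h3, Int.toNat_natCast]
  exact chebU_aux_pow lam x hx m
end

section
/- Let λ be a real number and x a nonzero real number. For every integer k ≥ 1, the k-th power of the 2×2 matrix product [[0, −x], [1/x, 0]] · [[1, 0], [−λ/x, 1]] equals the matrix [[U_k(λ), −U_{k−1}(λ)·x], [U_{k−1}(λ)/x, −U_{k−2}(λ)]]. -/
lemma chebAux_pow (lam x : ℝ) (hx : x ≠ 0) (m : ℕ) :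
    (!![(0 : ℝ), -x; 1 / x, 0] * !![(1 : ℝ), 0; -lam / x, 1]) ^ (m + 1) =
      !![chebUAux lam (m + 2), -chebUAux lam (m + 1) * x;
         chebUAux lam (m + 1) / x, -chebUAux lam m] := by
  induction m with
  | zero =>
    simp only [pow_one, chebUAux]
    ext i j
    fin_cases i <;> fin_cases j <;>
      simp [Matrix.mul_apply, Fin.sum_univ_two] <;> field_simp
  | succ n ih =>
    rw [pow_succ, ih]
    ext i j
    fin_cases i <;> fin_cases j <;>
      simp [Matrix.mul_apply, Fin.sum_univ_two, chebUAux] <;> (try field_simp) <;> ring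

/-- For `λ ∈ ℝ`, `x ≠ 0` and `k ≥ 1`,
`([[0,-x],[1/x,0]]·[[1,0],[-λ/x,1]])^k
  = [[U_k(λ), -U_{k-1}(λ)·x],[U_{k-1}(λ)/x, -U_{k-2}(λ)]]`. -/
theorem chebyshev_matrix_power_neg (lam x : ℝ) (hx : x ≠ 0) (k : ℕ) (hk : 1 ≤ k) :
    (!![(0 : ℝ), -x; 1 / x, 0] * !![(1 : ℝ), 0; -lam / x, 1]) ^ k =
      !![chebU (k : ℤ) lam, -chebU ((k : ℤ) - 1) lam * x;
         chebU ((k : ℤ) - 1) lam / x, -chebU ((k : ℤ) - 2) lam] := by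
  obtain ⟨m, rfl⟩ := Nat.exists_eq_add_of_le hk
  have h1 : ((((1 + m : ℕ) : ℤ)) + 1).toNat = m + 2 := by omega
  have h2 : ((((1 + m : ℕ) : ℤ)) - 1 + 1).toNat = m + 1 := by omega
  have h3 : ((((1 + m : ℕ) : ℤ)) - 2 + 1).toNat = m := by omega
  rw [show 1 + m = m + 1 from Nat.add_comm 1 m] at *
  simp only [chebU, h1, h2, h3]
  exact chebAux_pow lam x hx m
end

section
/- Let p ≥ 2 be an integer, λ_p = 2cos(π/p), and x a nonzero real number. Set M = [[1, 0], [λ_p/x, 1]] · [[0, x], [−1/x, 0]]. Then for every integer m ≥ 0, M^{m·p} = (−1)^m · Id, where Id is the 2×2 identity matrix; in particular M^p = −Id. Consequently, multiplying a product of 2×2 matrices by M^{m·p} changes neither the absolute value of the upper-right entry nor the absolute value of the trace of the product. -/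
/-- For `p ≥ 2`, `λ_p = 2cos(π/p)`, `x ≠ 0` and
`M = [[1,0],[λ_p/x,1]]·[[0,x],[-1/x,0]]`, we have `M^(m·p) = (-1)^m · Id`
for every `m ≥ 0` (in particular `M^p = -Id`), and hence multiplying any
2×2 matrix by `M^(m·p)` changes neither the absolute value of its
upper-right entry nor the absolute value of its trace. -/
theorem matrix_power_p_fold (p : ℕ) (hp : 2 ≤ p) (x : ℝ) (hx : x ≠ 0) :
    let lam : ℝ := 2 * Real.cos (Real.pi / (p : ℝ))
    let M : Matrix (Fin 2) (Fin 2) ℝ :=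
      !![(1 : ℝ), 0; lam / x, 1] * !![(0 : ℝ), x; -1 / x, 0]
    (∀ m : ℕ, M ^ (m * p) = ((-1 : ℝ) ^ m) • (1 : Matrix (Fin 2) (Fin 2) ℝ)) ∧
    M ^ p = -(1 : Matrix (Fin 2) (Fin 2) ℝ) ∧
    (∀ m : ℕ, ∀ A : Matrix (Fin 2) (Fin 2) ℝ,
      |(A * M ^ (m * p)) 0 1| = |A 0 1| ∧
      |(A * M ^ (m * p)).trace| = |A.trace|) := by
  intro lam M
  have hp0 : (0:ℝ) < p := by positivity
  set θ : ℝ := Real.pi / p with hθ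
  have hθpos : 0 < θ := by positivity
  have hθlt : θ < Real.pi := by
    rw [hθ]
    exact div_lt_self Real.pi_pos (by exact_mod_cast lt_of_lt_of_le one_lt_two hp)
  have hs : 0 < Real.sin θ := Real.sin_pos_of_pos_of_lt_pi hθpos hθlt
  set s : ℝ := Real.sin θ with hsdef
  have hsne : s ≠ 0 := ne_of_gt hs
  have hM : M = !![0, x; -1/x, lam] := by
    show (!![(1 : ℝ), 0; lam / x, 1] * !![(0 : ℝ), x; -1 / x, 0]) = _
    rw [Matrix.mul_fin_two]
    ext i j; fin_cases i <;> fin_cases j <;> simp [hx]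
  have trig : ∀ y : ℝ, Real.sin (y + θ) = 2 * Real.cos θ * Real.sin y - Real.sin (y - θ) := by
    intro y
    rw [Real.sin_add, Real.sin_sub]; ring
  have key : ∀ k : ℕ, s • M ^ k =
      !![-(Real.sin (((k:ℝ)-1)*θ)), x * Real.sin ((k:ℝ)*θ);
         -(Real.sin ((k:ℝ)*θ))/x, Real.sin (((k:ℝ)+1)*θ)] := by
    intro k
    induction k with
    | zero =>
      ext i j
      fin_cases i <;> fin_cases j <;>
        simp [Matrix.one_apply, hsdef] <;> ring_nf <;>
        simp [Real.sin_neg, Real.sin_zero]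
    | succ k ih =>
      have : M ^ (k+1) = M ^ k * M := pow_succ M k
      rw [this, ← smul_mul_assoc, ih, hM, Matrix.mul_fin_two]
      have h1 : ((k:ℝ)+1) * θ = (k:ℝ)*θ + θ := by ring
      have h2 : ((k:ℝ)) * θ = ((k:ℝ)+1)*θ - θ := by ring
      ext i j
      fin_cases i <;> fin_cases j <;> push_cast <;> simp
      · field_simp
      · rw [h1, trig]; push_cast; ring_nf; simp only [lam, ← hθ]; ring
      · field_simp
      · rw [show ((k:ℝ)+1+1)*θ = (((k:ℝ)+1)*θ) + θ by ring, trig,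
           show ((k:ℝ)+1)*θ - θ = (k:ℝ)*θ by ring]
        field_simp; ring
  have hMp : M ^ p = -(1 : Matrix (Fin 2) (Fin 2) ℝ) := by
    have hpθ : (p:ℝ) * θ = Real.pi := by
      rw [hθ]; field_simp [hp0.ne']
    have h1 : Real.sin (((p:ℝ)-1)*θ) = s := by
      rw [show ((p:ℝ)-1)*θ = Real.pi - θ by rw [← hpθ]; ring, Real.sin_pi_sub]
    have h2 : Real.sin ((p:ℝ)*θ) = 0 := by rw [hpθ, Real.sin_pi]
    have h3 : Real.sin (((p:ℝ)+1)*θ) = -s := by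
      rw [show ((p:ℝ)+1)*θ = Real.pi + θ by rw [← hpθ]; ring, Real.sin_add,
        Real.sin_pi, Real.cos_pi]; ring
    have := key p
    rw [h1, h2, h3] at this
    have h4 : s • M ^ p = s • (-(1 : Matrix (Fin 2) (Fin 2) ℝ)) := by
      rw [this]
      ext i j
      fin_cases i <;> fin_cases j <;> simp [Matrix.one_apply] <;> ring
    exact smul_right_injective _ hsne h4
  have hmain : ∀ m : ℕ, M ^ (m * p) = ((-1 : ℝ) ^ m) • (1 : Matrix (Fin 2) (Fin 2) ℝ) := by
    intro m
    rw [mul_comm, pow_mul, hMp]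
    rw [show -(1 : Matrix (Fin 2) (Fin 2) ℝ) = (-1:ℝ) • 1 by simp]
    rw [smul_pow, one_pow]
  refine ⟨hmain, hMp, ?_⟩
  intro m A
  rw [hmain m]
  constructor
  · rw [Matrix.mul_smul, Matrix.mul_one, Matrix.smul_apply, smul_eq_mul,
      abs_mul, abs_pow, abs_neg, abs_one, one_pow, one_mul]
  · rw [Matrix.mul_smul, Matrix.mul_one, Matrix.trace_smul, smul_eq_mul,
      abs_mul, abs_pow, abs_neg, abs_one, one_pow, one_mul]
end

section
/- For every integer n ≥ 1, the universal snake graph UG_n has exactly 2^n perfect matchings. -/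
/-- The directed edge relation of the universal snake graph `UG_n` on
vertex set `{0,1} × {0,…,n}`: vertical edges `(i,j) — (i,j+1)`,
horizontal edges `(0,j) — (1,j)`, and diagonal edges `(1,j) — (0,j+2)`. -/
def ugRel (n : ℕ) (a b : Fin 2 × Fin (n + 1)) : Prop :=
  (a.1 = b.1 ∧ (a.2 : ℕ) + 1 = (b.2 : ℕ)) ∨
  (a.2 = b.2 ∧ a.1 ≠ b.1) ∨
  (a.1 = 1 ∧ b.1 = 0 ∧ (a.2 : ℕ) + 2 = (b.2 : ℕ))

/-- The universal snake graph `UG_n` as a simple graph. -/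
def UG (n : ℕ) : SimpleGraph (Fin 2 × Fin (n + 1)) :=
  SimpleGraph.fromRel (ugRel n)


open SimpleGraph

variable {V : Type*} {G : SimpleGraph V}

def PMFun (G : SimpleGraph V) : Type _ :=
  {f : V → V // Function.Involutive f ∧ ∀ v, G.Adj v (f v)}

noncomputable def pmEquiv (G : SimpleGraph V) :
    {M : G.Subgraph // M.IsPerfectMatching} ≃ PMFun G where
  toFun M :=
    have h : ∀ v, ∃! w, M.1.Adj v w := Subgraph.isPerfectMatching_iff.mp M.2
    ⟨fun v => (h v).choose,
     fun v => ((h ((h v).choose)).choose_spec.2 v (M.1.adj_symm (h v).choose_spec.1)).symm,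
     fun v => M.1.adj_sub (h v).choose_spec.1⟩
  invFun f :=
    ⟨⟨Set.univ, fun a b => f.1 a = b,
      fun {a b} hab => hab ▸ f.2.2 a,
      fun _ => Set.mem_univ _,
      ⟨fun a b (hab : f.1 a = b) => by show f.1 b = a; rw [← hab, f.2.1 a]⟩⟩,
     Subgraph.isPerfectMatching_iff.mpr (fun v => ⟨f.1 v, rfl, fun y hy => Eq.symm hy⟩)⟩
  left_inv M := by
    have h : ∀ v, ∃! w, M.1.Adj v w := Subgraph.isPerfectMatching_iff.mp M.2
    apply Subtype.ext
    ext v w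
    · simp [M.2.2 v]
    · constructor
      · rintro rfl; exact (h v).choose_spec.1
      · intro hvw; exact ((h v).choose_spec.2 w hvw).symm
  right_inv f := by
    apply Subtype.ext
    funext v
    have h : ∀ x : V, ∃! w, f.1 x = w := fun x => ⟨f.1 x, rfl, fun y hy => hy.symm⟩
    exact ((h v).choose_spec.2 (f.1 v) rfl).symm

namespace UGaux

abbrev Vt (n : ℕ) := Fin 2 × Fin (n + 1)

def nadj (i j i' j' : ℕ) : Prop :=
  (i = i' ∧ (j + 1 = j' ∨ j' + 1 = j)) ∨ (j = j' ∧ i ≠ i') ∨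
  (i = 1 ∧ i' = 0 ∧ j + 2 = j') ∨ (i' = 1 ∧ i = 0 ∧ j' + 2 = j)

lemma UG_adj_iff {n : ℕ} (a b : Vt n) :
    (UG n).Adj a b ↔ nadj a.1.1 a.2.1 b.1.1 b.2.1 := by
  have h1 := a.1.isLt; have h2 := b.1.isLt
  simp only [UG, SimpleGraph.fromRel_adj, ugRel, nadj, ne_eq, Prod.ext_iff, Fin.ext_iff,
    Fin.val_one, Fin.val_zero]
  omega

/-- embedding of columns 0..n into columns 0..n+1 -/
def emb (n : ℕ) (v : Vt n) : Vt (n + 1) := (v.1, v.2.castSucc)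

/-- truncation -/
def dn (n : ℕ) (w : Vt (n + 1)) : Vt n := (w.1, ⟨min w.2.1 n, by omega⟩)

lemma dn_emb (n : ℕ) (v : Vt n) : dn n (emb n v) = v := by
  have := v.2.isLt
  have := v.2.isLt
  simp only [dn, emb, Prod.ext_iff, Fin.ext_iff, Fin.coe_castSucc]
  refine ⟨trivial, ?_⟩
  omega

lemma emb_dn (n : ℕ) (w : Vt (n + 1)) (h : w.2.1 ≤ n) : emb n (dn n w) = w := by
  simp only [dn, emb, Prod.ext_iff, Fin.ext_iff, Fin.coe_castSucc]
  refine ⟨trivial, ?_⟩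
  omega

lemma emb_inj {n : ℕ} {v v' : Vt n} (h : emb n v = emb n v') : v = v' := by
  simpa only [emb, Prod.ext_iff, Fin.ext_iff, Fin.coe_castSucc] using h

def L0 (n : ℕ) : Vt (n + 1) := (0, Fin.last (n + 1))
def L1 (n : ℕ) : Vt (n + 1) := (1, Fin.last (n + 1))
def B (n : ℕ) : Vt n := (1, Fin.last n)

lemma emb_snd (n : ℕ) (v : Vt n) : ((emb n v).2 : ℕ) = v.2.1 := rfl

lemma emb_ne_L0 (n : ℕ) (v : Vt n) : emb n v ≠ L0 n := by
  have := v.2.isLt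
  simp only [emb, L0, ne_eq, Prod.ext_iff, Fin.ext_iff, Fin.coe_castSucc, Fin.val_last]
  omega

lemma emb_ne_L1 (n : ℕ) (v : Vt n) : emb n v ≠ L1 n := by
  have := v.2.isLt
  simp only [emb, L1, ne_eq, Prod.ext_iff, Fin.ext_iff, Fin.coe_castSucc, Fin.val_last]
  omega

/-- a vertex in the last column is L0 or L1 -/
lemma last_col (n : ℕ) (w : Vt (n + 1)) (h : ¬ (w.2.1 ≤ n)) : w = L0 n ∨ w = L1 n := by
  have h1 := w.1.isLt; have h2 := w.2.isLt
  simp only [L0, L1, Prod.ext_iff, Fin.ext_iff, Fin.val_last, Fin.val_one, Fin.val_zero]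
  omega

lemma adj_dn {n : ℕ} {a b : Vt (n + 1)} (h : (UG (n+1)).Adj a b)
    (ha : a.2.1 ≤ n) (hb : b.2.1 ≤ n) : (UG n).Adj (dn n a) (dn n b) := by
  rw [UG_adj_iff] at h ⊢
  simp only [dn] at *
  simp only [nadj] at *
  omega

lemma adj_emb {n : ℕ} {u v : Vt n} (h : (UG n).Adj u v) :
    (UG (n+1)).Adj (emb n u) (emb n v) := by
  rw [UG_adj_iff] at h ⊢
  simp only [emb, Fin.coe_castSucc]
  exact h

end UGaux

namespace UGaux

variable {n : ℕ}

lemma Vt_eq_iff {m : ℕ} {w w' : Vt m} : w = w' ↔ (w.1.1 = w'.1.1 ∧ w.2.1 = w'.2.1) := by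
  simp [Prod.ext_iff, Fin.ext_iff]

@[simp] lemma L0_fst : (L0 n).1.1 = 0 := rfl
@[simp] lemma L0_snd : (L0 n).2.1 = n + 1 := rfl
@[simp] lemma L1_fst : (L1 n).1.1 = 1 := rfl
@[simp] lemma L1_snd : (L1 n).2.1 = n + 1 := rfl
@[simp] lemma B_fst : (B n).1.1 = 1 := rfl
@[simp] lemma B_snd : (B n).2.1 = n := rfl
@[simp] lemma emb_fst' (v : Vt n) : (emb n v).1.1 = v.1.1 := rfl
@[simp] lemma emb_snd' (v : Vt n) : (emb n v).2.1 = v.2.1 := rfl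
@[simp] lemma dn_fst (w : Vt (n+1)) : (dn n w).1.1 = w.1.1 := rfl
@[simp] lemma dn_snd (w : Vt (n+1)) : (dn n w).2.1 = min w.2.1 n := rfl

lemma L0_ne_L1 : L0 n ≠ L1 n := by rw [ne_eq, Vt_eq_iff]; simp

section F
variable {f : Vt (n+1) → Vt (n+1)} (hinv : Function.Involutive f)
  (hadj : ∀ v, (UG (n+1)).Adj v (f v))

include hadj in
lemma fL1_opts : f (L1 n) = L0 n ∨ f (L1 n) = emb n (B n) := by
  have h := (UG_adj_iff _ _).mp (hadj (L1 n))
  have h1 := (f (L1 n)).1.isLt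
  have h2 := (f (L1 n)).2.isLt
  simp only [nadj, L1_fst, L1_snd] at h
  rw [Vt_eq_iff (w' := L0 n), Vt_eq_iff (w' := emb n (B n))]
  simp only [L0_fst, L0_snd, emb_fst', emb_snd', B_fst, B_snd]
  omega

include hinv hadj in
lemma fL0_opts (hb : f (L1 n) = emb n (B n)) :
    (f (L0 n)).2.1 ≤ n ∧ (UG n).Adj (B n) (dn n (f (L0 n))) := by
  have hne : f (L0 n) ≠ L1 n := by
    intro h
    have : L0 n = f (L1 n) := by rw [← h, hinv]
    rw [hb, Vt_eq_iff] at this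
    simp at this
  have h := (UG_adj_iff _ _).mp (hadj (L0 n))
  have h1 := (f (L0 n)).1.isLt
  have h2 := (f (L0 n)).2.isLt
  simp only [nadj, L0_fst, L0_snd] at h
  rw [ne_eq, Vt_eq_iff] at hne
  simp only [L1_fst, L1_snd] at hne
  rw [UG_adj_iff]
  simp only [nadj, B_fst, B_snd, dn_fst, dn_snd]
  omega

end F

end UGaux

namespace UGaux

variable {n : ℕ}

lemma not_last {w : Vt (n+1)} (h0 : w ≠ L0 n) (h1 : w ≠ L1 n) : w.2.1 ≤ n := by
  by_contra h
  rcases last_col n w h with h' | h' <;> [exact h0 h'; exact h1 h']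

/-- forward map, case `f (L1) = L0` -/
def fwdA (n : ℕ) (f : Vt (n+1) → Vt (n+1)) : Vt n → Vt n :=
  fun v => dn n (f (emb n v))

/-- forward map, case `f (L1) = emb B` -/
def fwdB (n : ℕ) (f : Vt (n+1) → Vt (n+1)) : Vt n → Vt n :=
  fun v =>
    if emb n v = f (L0 n) then B n
    else if v = B n then dn n (f (L0 n))
    else dn n (f (emb n v))

def fwdFun (n : ℕ) (f : Vt (n+1) → Vt (n+1)) : Vt n → Vt n :=
  if f (L1 n) = L0 n then fwdA n f else fwdB n f

section CaseA
variable {f : Vt (n+1) → Vt (n+1)} (hinv : Function.Involutive f)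
  (hadj : ∀ v, (UG (n+1)).Adj v (f v)) (hb : f (L1 n) = L0 n)

include hinv hb

lemma hA_L0 : f (L0 n) = L1 n := by rw [← hb, hinv]

lemma hA_notlast (v : Vt n) : (f (emb n v)).2.1 ≤ n := by
  by_contra h
  rcases last_col n _ h with h' | h'
  · have : emb n v = f (L0 n) := by rw [← h', hinv]
    rw [hA_L0 hinv hb] at this
    exact emb_ne_L1 n v this
  · have : emb n v = f (L1 n) := by rw [← h', hinv]
    rw [hb] at this
    exact emb_ne_L0 n v this

lemma hA_emb (v : Vt n) : emb n (fwdA n f v) = f (emb n v) :=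
  emb_dn n _ (hA_notlast hinv hb v)

lemma fwdA_inv : Function.Involutive (fwdA n f) := by
  intro v
  show dn n (f (emb n (fwdA n f v))) = v
  rw [hA_emb hinv hb, hinv, dn_emb]

include hadj in
lemma fwdA_adj (v : Vt n) : (UG n).Adj v (fwdA n f v) := by
  have h := adj_dn (hadj (emb n v)) (by have := v.2.isLt; simp only [emb_snd']; omega) (hA_notlast hinv hb v)
  rwa [dn_emb] at h

end CaseA

end UGaux

namespace UGaux

variable {n : ℕ}

section CaseB
variable {f : Vt (n+1) → Vt (n+1)} (hinv : Function.Involutive f)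
  (hadj : ∀ v, (UG (n+1)).Adj v (f v)) (hb : f (L1 n) = emb n (B n))

include hinv hadj hb

lemma hB_emb : emb n (dn n (f (L0 n))) = f (L0 n) :=
  emb_dn n _ (fL0_opts hinv hadj hb).1

lemma hB_adj : (UG n).Adj (B n) (dn n (f (L0 n))) := (fL0_opts hinv hadj hb).2

lemma hB_pne : dn n (f (L0 n)) ≠ B n := (hB_adj hinv hadj hb).ne'

lemma hB_notlast (v : Vt n) (h1 : v ≠ dn n (f (L0 n))) (h2 : v ≠ B n) :
    (f (emb n v)).2.1 ≤ n := by
  by_contra h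
  rcases last_col n _ h with h' | h'
  · have : emb n v = f (L0 n) := by rw [← h', hinv]
    rw [← hB_emb hinv hadj hb] at this
    exact h1 (emb_inj this)
  · have : emb n v = f (L1 n) := by rw [← h', hinv]
    rw [hb] at this
    exact h2 (emb_inj this)

lemma fwdB_at_p : fwdB n f (dn n (f (L0 n))) = B n := by
  simp only [fwdB, if_pos (hB_emb hinv hadj hb)]

lemma fwdB_at_B : fwdB n f (B n) = dn n (f (L0 n)) := by
  have h1 : emb n (B n) ≠ f (L0 n) := by
    rw [← hB_emb hinv hadj hb]
    exact fun h => (hB_pne hinv hadj hb) (emb_inj h).symm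
  simp only [fwdB, if_neg h1, if_true, eq_self_iff_true]

lemma fwdB_at_other (v : Vt n) (h1 : v ≠ dn n (f (L0 n))) (h2 : v ≠ B n) :
    fwdB n f v = dn n (f (emb n v)) := by
  have hc1 : emb n v ≠ f (L0 n) := by
    rw [← hB_emb hinv hadj hb]
    exact fun h => h1 (emb_inj h)
  simp only [fwdB, if_neg hc1, if_neg h2]

lemma hB_emb_other (v : Vt n) (h1 : v ≠ dn n (f (L0 n))) (h2 : v ≠ B n) :
    emb n (dn n (f (emb n v))) = f (emb n v) :=
  emb_dn n _ (hB_notlast hinv hadj hb v h1 h2)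

lemma hB_other_ne (v : Vt n) (h1 : v ≠ dn n (f (L0 n))) (h2 : v ≠ B n) :
    dn n (f (emb n v)) ≠ dn n (f (L0 n)) ∧ dn n (f (emb n v)) ≠ B n := by
  constructor
  · intro h
    have : f (emb n v) = f (L0 n) := by
      rw [← hB_emb_other hinv hadj hb v h1 h2, h, hB_emb hinv hadj hb]
    exact emb_ne_L0 n v (hinv.injective this)
  · intro h
    have : f (emb n v) = f (L1 n) := by
      rw [← hB_emb_other hinv hadj hb v h1 h2, h, hb]
    exact emb_ne_L1 n v (hinv.injective this)

lemma fwdB_inv : Function.Involutive (fwdB n f) := by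
  intro v
  by_cases h1 : v = dn n (f (L0 n))
  · rw [h1, fwdB_at_p hinv hadj hb, fwdB_at_B hinv hadj hb]
  · by_cases h2 : v = B n
    · rw [h2, fwdB_at_B hinv hadj hb, fwdB_at_p hinv hadj hb]
    · rw [fwdB_at_other hinv hadj hb v h1 h2]
      obtain ⟨hr1, hr2⟩ := hB_other_ne hinv hadj hb v h1 h2
      rw [fwdB_at_other hinv hadj hb _ hr1 hr2, hB_emb_other hinv hadj hb v h1 h2, hinv, dn_emb]

lemma fwdB_adj (v : Vt n) : (UG n).Adj v (fwdB n f v) := by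
  by_cases h1 : v = dn n (f (L0 n))
  · rw [h1, fwdB_at_p hinv hadj hb]
    exact (hB_adj hinv hadj hb).symm
  · by_cases h2 : v = B n
    · rw [h2, fwdB_at_B hinv hadj hb]
      exact hB_adj hinv hadj hb
    · rw [fwdB_at_other hinv hadj hb v h1 h2]
      have h := adj_dn (hadj (emb n v)) (by have := v.2.isLt; simp only [emb_snd']; omega)
        (hB_notlast hinv hadj hb v h1 h2)
      rwa [dn_emb] at h

end CaseB

end UGaux

namespace UGaux

variable {n : ℕ}

def bwdT (n : ℕ) (g : Vt n → Vt n) : Vt (n+1) → Vt (n+1) := fun w =>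
  if w = L0 n then L1 n else if w = L1 n then L0 n else emb n (g (dn n w))

def bwdF (n : ℕ) (g : Vt n → Vt n) : Vt (n+1) → Vt (n+1) := fun w =>
  if w = L1 n then emb n (B n)
  else if w = emb n (B n) then L1 n
  else if w = L0 n then emb n (g (B n))
  else if w = emb n (g (B n)) then L0 n
  else emb n (g (dn n w))

def bwdFun (n : ℕ) (b : Bool) (g : Vt n → Vt n) : Vt (n+1) → Vt (n+1) :=
  if b then bwdT n g else bwdF n g

lemma adj_L0_L1 : (UG (n+1)).Adj (L0 n) (L1 n) := by
  rw [UG_adj_iff]; simp [nadj]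

lemma adj_L1_embB : (UG (n+1)).Adj (L1 n) (emb n (B n)) := by
  rw [UG_adj_iff]; simp [nadj]

lemma adj_L0_embq {q : Vt n} (h : (UG n).Adj (B n) q) :
    (UG (n+1)).Adj (L0 n) (emb n q) := by
  rw [UG_adj_iff] at h ⊢
  have h1 := q.1.isLt; have h2 := q.2.isLt
  simp only [nadj, B_fst, B_snd, L0_fst, L0_snd, emb_fst', emb_snd', true_and, and_true] at h ⊢
  omega

section BwdT
variable {g : Vt n → Vt n} (hg : Function.Involutive g)
  (hga : ∀ v, (UG n).Adj v (g v))

lemma bwdT_at_L0 : bwdT n g (L0 n) = L1 n := by simp [bwdT]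

lemma bwdT_at_L1 : bwdT n g (L1 n) = L0 n := by
  simp [bwdT, L0_ne_L1.symm]

lemma bwdT_at_other (w : Vt (n+1)) (h0 : w ≠ L0 n) (h1 : w ≠ L1 n) :
    bwdT n g w = emb n (g (dn n w)) := by
  simp only [bwdT, if_neg h0, if_neg h1]

include hg in
lemma bwdT_inv : Function.Involutive (bwdT n g) := by
  intro w
  by_cases h0 : w = L0 n
  · rw [h0, bwdT_at_L0, bwdT_at_L1]
  · by_cases h1 : w = L1 n
    · rw [h1, bwdT_at_L1, bwdT_at_L0]
    · rw [bwdT_at_other w h0 h1, bwdT_at_other _ (emb_ne_L0 n _) (emb_ne_L1 n _),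
        dn_emb, hg, emb_dn n w (not_last h0 h1)]

include hga in
lemma bwdT_adj (w : Vt (n+1)) : (UG (n+1)).Adj w (bwdT n g w) := by
  by_cases h0 : w = L0 n
  · rw [h0, bwdT_at_L0]; exact adj_L0_L1
  · by_cases h1 : w = L1 n
    · rw [h1, bwdT_at_L1]; exact adj_L0_L1.symm
    · rw [bwdT_at_other w h0 h1]
      have := adj_emb (hga (dn n w))
      rwa [emb_dn n w (not_last h0 h1)] at this

end BwdT

end UGaux

namespace UGaux

variable {n : ℕ}

section BwdF
variable {g : Vt n → Vt n} (hg : Function.Involutive g)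
  (hga : ∀ v, (UG n).Adj v (g v))

include hga in
lemma hq_ne : g (B n) ≠ B n := (hga (B n)).ne'

lemma L1_ne_embB : L1 n ≠ emb n (B n) := (emb_ne_L1 n (B n)).symm
lemma L1_ne_L0 : L1 n ≠ L0 n := L0_ne_L1.symm
lemma L1_ne_embq : L1 n ≠ emb n (g (B n)) := (emb_ne_L1 n _).symm
lemma embB_ne_L0 : emb n (B n) ≠ L0 n := emb_ne_L0 n _

include hga in
lemma embB_ne_embq : emb n (B n) ≠ emb n (g (B n)) :=
  fun h => hq_ne hga (emb_inj h).symm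

lemma L0_ne_embq : L0 n ≠ emb n (g (B n)) := (emb_ne_L0 n _).symm

lemma bwdF_at_L1 : bwdF n g (L1 n) = emb n (B n) := by simp [bwdF]

lemma bwdF_at_embB : bwdF n g (emb n (B n)) = L1 n := by
  simp only [bwdF, if_neg (emb_ne_L1 n (B n)), if_true, eq_self_iff_true]

lemma bwdF_at_L0 : bwdF n g (L0 n) = emb n (g (B n)) := by
  simp only [bwdF, if_neg L1_ne_L0.symm, if_neg embB_ne_L0.symm, if_true, eq_self_iff_true]

include hga in
lemma bwdF_at_embq : bwdF n g (emb n (g (B n))) = L0 n := by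
  simp only [bwdF, if_neg (L1_ne_embq (g := g)).symm, if_neg (embB_ne_embq hga).symm,
    if_neg (L0_ne_embq (g := g)).symm, if_true, eq_self_iff_true]

lemma bwdF_at_other (w : Vt (n+1)) (h1 : w ≠ L1 n) (h2 : w ≠ emb n (B n))
    (h3 : w ≠ L0 n) (h4 : w ≠ emb n (g (B n))) :
    bwdF n g w = emb n (g (dn n w)) := by
  simp only [bwdF, if_neg h1, if_neg h2, if_neg h3, if_neg h4]

include hg in
lemma bwdF_other_ne (w : Vt (n+1)) (h1 : w ≠ L1 n) (h2 : w ≠ emb n (B n))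
    (h3 : w ≠ L0 n) (h4 : w ≠ emb n (g (B n))) :
    emb n (g (dn n w)) ≠ L1 n ∧ emb n (g (dn n w)) ≠ emb n (B n) ∧
    emb n (g (dn n w)) ≠ L0 n ∧ emb n (g (dn n w)) ≠ emb n (g (B n)) := by
  have hw : emb n (dn n w) = w := emb_dn n w (not_last h3 h1)
  refine ⟨emb_ne_L1 n _, fun h => ?_, emb_ne_L0 n _, fun h => ?_⟩
  · have : dn n w = g (B n) := by
      have := emb_inj h
      rw [← this, hg]  -- g (g (dn n w)) = dn n w ; we need dn n w = g (B n)
    exact h4 (by rw [← this, hw])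
  · have : dn n w = B n := by
      have h' := emb_inj h
      have := congrArg g h'
      rwa [hg, hg] at this
    exact h2 (by rw [← this, hw])

include hg hga in
lemma bwdF_inv : Function.Involutive (bwdF n g) := by
  intro w
  by_cases h1 : w = L1 n
  · rw [h1, bwdF_at_L1, bwdF_at_embB]
  · by_cases h2 : w = emb n (B n)
    · rw [h2, bwdF_at_embB, bwdF_at_L1]
    · by_cases h3 : w = L0 n
      · rw [h3, bwdF_at_L0, bwdF_at_embq hga]
      · by_cases h4 : w = emb n (g (B n))
        · rw [h4, bwdF_at_embq hga, bwdF_at_L0]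
        · rw [bwdF_at_other w h1 h2 h3 h4]
          obtain ⟨k1, k2, k3, k4⟩ := bwdF_other_ne hg w h1 h2 h3 h4
          rw [bwdF_at_other _ k1 k2 k3 k4, dn_emb, hg, emb_dn n w (not_last h3 h1)]

include hga in
lemma bwdF_adj (w : Vt (n+1)) : (UG (n+1)).Adj w (bwdF n g w) := by
  by_cases h1 : w = L1 n
  · rw [h1, bwdF_at_L1]; exact adj_L1_embB
  · by_cases h2 : w = emb n (B n)
    · rw [h2, bwdF_at_embB]; exact adj_L1_embB.symm
    · by_cases h3 : w = L0 n
      · rw [h3, bwdF_at_L0]; exact adj_L0_embq (hga (B n))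
      · by_cases h4 : w = emb n (g (B n))
        · rw [h4, bwdF_at_embq hga]
          exact (adj_L0_embq (hga (B n))).symm
        · rw [bwdF_at_other w h1 h2 h3 h4]
          have := adj_emb (hga (dn n w))
          rwa [emb_dn n w (not_last h3 h1)] at this

end BwdF

end UGaux

namespace UGaux

def PF (n : ℕ) : Type := {f : Vt n → Vt n // Function.Involutive f ∧ ∀ v, (UG n).Adj v (f v)}

variable {n : ℕ}

lemma fwdFun_spec {f : Vt (n+1) → Vt (n+1)} (hinv : Function.Involutive f)
    (hadj : ∀ v, (UG (n+1)).Adj v (f v)) :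
    Function.Involutive (fwdFun n f) ∧ ∀ v, (UG n).Adj v (fwdFun n f v) := by
  unfold fwdFun
  by_cases h : f (L1 n) = L0 n
  · rw [if_pos h]
    exact ⟨fwdA_inv hinv h, fwdA_adj hinv hadj h⟩
  · rw [if_neg h]
    rcases fL1_opts hadj with h' | h'
    · exact absurd h' h
    · exact ⟨fwdB_inv hinv hadj h', fwdB_adj hinv hadj h'⟩

lemma bwdFun_spec (b : Bool) {g : Vt n → Vt n} (hg : Function.Involutive g)
    (hga : ∀ v, (UG n).Adj v (g v)) :
    Function.Involutive (bwdFun n b g) ∧ ∀ w, (UG (n+1)).Adj w (bwdFun n b g w) := by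
  cases b
  · simp only [bwdFun, Bool.false_eq_true, if_neg, if_false]
    exact ⟨bwdF_inv hg hga, bwdF_adj hga⟩
  · simp only [bwdFun, if_true]
    exact ⟨bwdT_inv hg, bwdT_adj hga⟩

def stepEquiv (n : ℕ) : PF (n+1) ≃ Bool × PF n where
  toFun f := (if f.1 (L1 n) = L0 n then true else false,
    ⟨fwdFun n f.1, (fwdFun_spec f.2.1 f.2.2).1, (fwdFun_spec f.2.1 f.2.2).2⟩)
  invFun p := ⟨bwdFun n p.1 p.2.1, (bwdFun_spec p.1 p.2.2.1 p.2.2.2).1,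
    (bwdFun_spec p.1 p.2.2.1 p.2.2.2).2⟩
  left_inv f := by
    obtain ⟨f, hinv, hadj⟩ := f
    apply Subtype.ext
    simp only
    by_cases h : f (L1 n) = L0 n
    · rw [if_pos h]
      have hgdef : fwdFun n f = fwdA n f := by unfold fwdFun; rw [if_pos h]
      rw [hgdef]
      simp only [bwdFun, if_true]
      funext w
      by_cases h0 : w = L0 n
      · rw [h0, bwdT_at_L0, ← hA_L0 hinv h]
      · by_cases h1 : w = L1 n
        · rw [h1, bwdT_at_L1, ← h]
        · rw [bwdT_at_other w h0 h1, hA_emb hinv h, emb_dn n w (not_last h0 h1)]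
    · rw [if_neg h]
      rcases fL1_opts hadj with h' | h'
      · exact absurd h' h
      have hgdef : fwdFun n f = fwdB n f := by unfold fwdFun; rw [if_neg h]
      rw [hgdef]
      simp only [bwdFun, Bool.false_eq_true, if_false]
      have hgB : fwdB n f (B n) = dn n (f (L0 n)) := fwdB_at_B hinv hadj h'
      funext w
      by_cases h1 : w = L1 n
      · rw [h1, bwdF_at_L1, ← h']
      · by_cases h2 : w = emb n (B n)
        · rw [h2, bwdF_at_embB, ← h', hinv]
        · by_cases h3 : w = L0 n
          · rw [h3, bwdF_at_L0, hgB, hB_emb hinv hadj h']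
          · by_cases h4 : w = emb n (fwdB n f (B n))
            · rw [h4, bwdF_at_embq (fwdB_adj hinv hadj h'), hgB, hB_emb hinv hadj h', hinv]
            · rw [bwdF_at_other w h1 h2 h3 h4]
              have hdw : emb n (dn n w) = w := emb_dn n w (not_last h3 h1)
              have hd1 : dn n w ≠ dn n (f (L0 n)) := by
                intro hc
                apply h4
                rw [hgB, ← hc, hdw]
              have hd2 : dn n w ≠ B n := by
                intro hc
                apply h2
                rw [← hc, hdw]
              rw [fwdB_at_other hinv hadj h' _ hd1 hd2, hdw]
              exact emb_dn n (f w) (by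
                have := hB_notlast hinv hadj h' (dn n w) hd1 hd2
                rwa [hdw] at this)
  right_inv p := by
    obtain ⟨b, g, hg, hga⟩ := p
    cases b
    · -- b = false
      have hfdef : bwdFun n false g = bwdF n g := by
        simp [bwdFun]
      refine Prod.ext ?_ (Subtype.ext ?_)
      · simp only [hfdef, bwdF_at_L1]
        rw [if_neg embB_ne_L0]
      · simp only [hfdef]
        have hcond : ¬ bwdF n g (L1 n) = L0 n := by rw [bwdF_at_L1]; exact embB_ne_L0
        have hfw : fwdFun n (bwdF n g) = fwdB n (bwdF n g) := by unfold fwdFun; rw [if_neg hcond]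
        rw [hfw]
        have hfL0 : bwdF n g (L0 n) = emb n (g (B n)) := bwdF_at_L0
        funext v
        by_cases hv1 : v = g (B n)
        · have : emb n v = bwdF n g (L0 n) := by rw [hfL0, hv1]
          rw [fwdB, if_pos this, hv1, hg]
        · by_cases hv2 : v = B n
          · have c1 : ¬ emb n v = bwdF n g (L0 n) := by
              rw [hfL0]
              exact fun hc => hv1 (emb_inj hc)
            rw [fwdB, if_neg c1, if_pos hv2, hfL0, dn_emb, hv2]
          · have c1 : ¬ emb n v = bwdF n g (L0 n) := by
              rw [hfL0]
              exact fun hc => hv1 (emb_inj hc)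
            rw [fwdB, if_neg c1, if_neg hv2]
            have e1 : emb n v ≠ L1 n := emb_ne_L1 n v
            have e2 : emb n v ≠ emb n (B n) := fun hc => hv2 (emb_inj hc)
            have e3 : emb n v ≠ L0 n := emb_ne_L0 n v
            have e4 : emb n v ≠ emb n (g (B n)) := fun hc => hv1 (emb_inj hc)
            rw [bwdF_at_other _ e1 e2 e3 e4, dn_emb, dn_emb]
    · -- b = true
      have hfdef : bwdFun n true g = bwdT n g := by simp [bwdFun]
      refine Prod.ext ?_ (Subtype.ext ?_)
      · simp only [hfdef, bwdT_at_L1]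
        simp
      · simp only [hfdef]
        have hcond : bwdT n g (L1 n) = L0 n := bwdT_at_L1
        have hfw : fwdFun n (bwdT n g) = fwdA n (bwdT n g) := by unfold fwdFun; rw [if_pos hcond]
        rw [hfw]
        funext v
        show dn n (bwdT n g (emb n v)) = g v
        rw [bwdT_at_other _ (emb_ne_L0 n v) (emb_ne_L1 n v), dn_emb, dn_emb]

end UGaux

namespace UGaux

def swap0 : Vt 0 → Vt 0 := fun v => (⟨1 - v.1.1, by omega⟩, v.2)

lemma swap0_inv : Function.Involutive swap0 := by
  intro v
  revert v
  show ∀ v : Vt 0, swap0 (swap0 v) = v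
  decide

lemma swap0_adj (v : Vt 0) : (UG 0).Adj v (swap0 v) := by
  rw [UG_adj_iff]
  revert v
  show ∀ v : Vt 0, nadj v.1.1 v.2.1 (swap0 v).1.1 (swap0 v).2.1
  unfold nadj swap0
  decide

lemma two_elt : ∀ (x y v : Vt 0), x ≠ v → y ≠ v → x = y := by decide

lemma card_PF_zero : Nat.card (PF 0) = 1 := by
  rw [Nat.card_eq_one_iff_unique]
  constructor
  · constructor
    intro f g
    apply Subtype.ext
    funext v
    exact two_elt _ _ v (f.2.2 v).ne' (g.2.2 v).ne'
  · exact ⟨⟨swap0, swap0_inv, swap0_adj⟩⟩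

lemma card_PF (n : ℕ) : Nat.card (PF n) = 2 ^ n := by
  induction n with
  | zero => simpa using card_PF_zero
  | succ m ih =>
    rw [Nat.card_congr (stepEquiv m), Nat.card_prod, ih, Nat.card_eq_fintype_card]
    simp [pow_succ]
    ring

end UGaux

/-- For every `n ≥ 1`, the universal snake graph `UG_n` has exactly `2^n`
perfect matchings. -/
theorem card_perfectMatchings_UG (n : ℕ) (hn : 1 ≤ n) :
    Nat.card {M : (UG n).Subgraph // M.IsPerfectMatching} = 2 ^ n := by
  rw [Nat.card_congr (pmEquiv (UG n))]
  exact UGaux.card_PF n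
end
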